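/- Let h(t) = (t³ − 1)(t − 1)(t² + 1) ∈ ℤ[t] and V₈₂₁(t) = t⁷ − 2t⁶ + 2t⁵ − 3t⁴ + 3t³ − 2t² + 2t. For every integer n, the polynomial p(t) = V₈₂₁(t) + n·h(t)·(2t − 1) satisfies: p(1) = 1, p′(1) = 0 (formal derivative at 1), p(ζ₃) = 1, p(i) = 1, and p(ζ₆) = (1 + 2n)·√3·i, where evaluations are in ℂ. -/

import Mathlib

open Polynomial

theorem stmt_7 (n : ℤ) :
    let h : ℤ[X] := (X^3 - 1) * (X - 1) * (X^2 + 1)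
    let V821 : ℤ[X] := X^7 - 2*X^6 + 2*X^5 - 3*X^4 + 3*X^3 - 2*X^2 + 2*X
    let p : ℤ[X] := V821 + C n * h * (2 * X - 1)
    p.eval 1 = 1 ∧
    (derivative p).eval 1 = 0 ∧
    aeval (Complex.exp (2 * Real.pi * Complex.I / 3)) p = 1 ∧
    aeval Complex.I p = 1 ∧
    aeval (Complex.exp (Real.pi * Complex.I / 3)) p =
      (1 + 2 * (n : ℂ)) * (Real.sqrt 3 : ℂ) * Complex.I := by
  intro h V821 p
  have hs : (Real.sqrt 3 : ℂ)^2 = 3 := by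
    norm_cast
    rw [Real.sq_sqrt] <;> norm_num
  set w : ℂ := Complex.exp (Real.pi * Complex.I / 3) with hwdef
  have hw : w = 1/2 + (Real.sqrt 3 : ℂ)/2 * Complex.I := by
    rw [hwdef, show ((Real.pi : ℂ) * Complex.I / 3 : ℂ) = ((Real.pi/3 : ℝ) : ℂ) * Complex.I by
      push_cast; ring, Complex.exp_mul_I, ← Complex.ofReal_cos, ← Complex.ofReal_sin,
      Real.cos_pi_div_three, Real.sin_pi_div_three]
    push_cast; ring
  have hw2 : w^2 = w - 1 := by
    rw [hw]
    linear_combination (Complex.I^2/4) * hs + (3/4 : ℂ) * Complex.I_sq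
  have hz : Complex.exp (2 * Real.pi * Complex.I / 3) = w^2 := by
    rw [hwdef, ← Complex.exp_nat_mul]
    norm_num
    ring_nf
  refine ⟨?_, ?_, ?_, ?_, ?_⟩
  · simp only [p, V821, h]
    simp [eval_mul, eval_add, eval_sub, eval_pow]
  · simp only [p, V821, h]
    simp [eval_mul, eval_add, eval_sub, eval_pow]
  · simp only [p, V821, h, map_add, map_sub, map_mul, map_pow, map_ofNat, aeval_X, aeval_C,
      map_one, map_natCast, map_intCast, eq_intCast]
    rw [hz]
    push_cast
    linear_combination ((1+2*(n:ℂ))*w^12 + (1+2*(n:ℂ))*w^11 + (-2-3*(n:ℂ))*w^10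
      + (-3-5*(n:ℂ))*w^9 + (1+(n:ℂ))*w^8 + (4+6*(n:ℂ))*w^7 + (-4-6*(n:ℂ))*w^5
      + (-1-2*(n:ℂ))*w^4 + (3+4*(n:ℂ))*w^3 + (2+3*(n:ℂ))*w^2 + (-1-(n:ℂ))*w
      + (-1-(n:ℂ))) * hw2
  · simp only [p, V821, h, map_add, map_sub, map_mul, map_pow, map_ofNat, aeval_X, aeval_C,
      map_one, map_natCast, map_intCast, eq_intCast]
    push_cast
    linear_combination ((1+2*(n:ℂ))*Complex.I^5 + (-2-3*(n:ℂ))*Complex.I^4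
      + (1+(n:ℂ))*Complex.I^3 + (-1-2*(n:ℂ))*Complex.I^2 + (2+3*(n:ℂ))*Complex.I
      + (-1-(n:ℂ)) + (-Complex.I^5 + 2*Complex.I^4 - Complex.I^3 + Complex.I^2
      + 2*Complex.I - 3)) * Complex.I_sq
  · simp only [p, V821, h, map_add, map_sub, map_mul, map_pow, map_ofNat, aeval_X, aeval_C,
      map_one, map_natCast, map_intCast, eq_intCast]
    push_cast
    linear_combination ((1+2*(n:ℂ))*w^5 + (-1-(n:ℂ))*w^4 + (-2-4*(n:ℂ))*w^2 + w
      + (1+(n:ℂ))) * hw2 + (2*(1+2*(n:ℂ))) * hw
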